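/- Let E be a module over a ring with two commuting-up-to-b² operators a and b, with b injective, and suppose x ∈ E satisfies (a+b)^N x = 0 for some N. If a is injective on E, then x = 0. -/

import Mathlib

/-- If `a`, `b` are injective additive endomorphisms of an abelian group `E`
with `a∘b - b∘a = b∘b`, and `(a+b)^N x = 0`, then `x = 0`. -/
theorem stmt4 (E : Type*) [AddCommGroup E] (a b : Module.End ℤ E)
    (h : a * b - b * a = b * b)
    (ha : Function.Injective a) (hb : Function.Injective b)
    (N : ℕ) (x : E) (hx : ((a + b) ^ N) x = 0) : x = 0 := by
  have hkey : b * (a + b) = a * b := by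
    have h' : a * b = b * b + b * a := sub_eq_iff_eq_add.mp h
    rw [mul_add, h', add_comm]
  have hN : ∀ n : ℕ, b * (a + b) ^ n = a ^ n * b := by
    intro n
    induction n with
    | zero => simp
    | succ n ih =>
      calc b * (a + b) ^ (n + 1) = (b * (a + b)) * (a + b) ^ n := by
            rw [pow_succ', ← mul_assoc]
        _ = a * (b * (a + b) ^ n) := by rw [hkey, mul_assoc]
        _ = a ^ (n + 1) * b := by rw [ih, pow_succ', mul_assoc]
  have h1 : (a ^ N) (b x) = 0 := by
    have := congrArg (fun f : Module.End ℤ E => f x) (hN N)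
    simp only [Module.End.mul_apply] at this
    rw [← this, hx, map_zero]
  have haN : ∀ n : ℕ, Function.Injective (a ^ n : Module.End ℤ E) := by
    intro n
    induction n with
    | zero => exact fun u v h => by simpa using h
    | succ n ih =>
      rw [pow_succ']
      intro u v huv
      simp only [Module.End.mul_apply] at huv
      exact ih (ha huv)
  have hbx : b x = 0 := haN N (by simpa using h1)
  exact hb (by simpa using hbx)
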